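/- Under the assumptions that the attacker's prior satisfies |log(f^B(d)/f_D(d))| ≤ ε and the mechanism satisfies ε_m-Maximum Bayesian Privacy, the Average Bayesian Privacy leakage ε_a = sqrt(JS(F^A ‖ F^B)) is bounded by ε_a ≤ (1/√2)·sqrt((ε_m + ε)·(e^{ε_m+ε} − 1)). -/

import Mathlib

open Real MeasureTheory

/-- Jensen–Shannon divergence of two densities w.r.t. a reference measure μ. -/
noncomputable def JSdiv {α : Type*} [MeasurableSpace α] (μ : Measure α)
    (fA fB : α → ℝ) : ℝ :=
  (1 / 2) * (∫ d, fA d * Real.log (fA d / ((fA d + fB d) / 2)) ∂μ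
    + ∫ d, fB d * Real.log (fB d / ((fA d + fB d) / 2)) ∂μ)

/-- ψ x = x * log (x / ((x+1)/2)) -/
noncomputable def psiJS (x : ℝ) : ℝ := x * Real.log (x / ((x + 1) / 2))

lemma psiJS_strictMonoOn : StrictMonoOn psiJS (Set.Icc (1/2 : ℝ) 2) := by
  have hcong : ∀ x ∈ Set.Icc (1/2 : ℝ) 2,
      psiJS x = x * (Real.log x - Real.log ((x + 1) / 2)) := by
    intro x hx
    have hx0 : (0:ℝ) < x := lt_of_lt_of_le (by norm_num) hx.1
    have hx1 : (0:ℝ) < (x + 1) / 2 := by linarith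
    rw [psiJS, Real.log_div (ne_of_gt hx0) (ne_of_gt hx1)]
  have hmono : StrictMonoOn (fun x : ℝ => x * (Real.log x - Real.log ((x + 1) / 2)))
      (Set.Icc (1/2 : ℝ) 2) := by
    apply strictMonoOn_of_deriv_pos (convex_Icc _ _)
    · apply ContinuousOn.mul continuousOn_id
      apply ContinuousOn.sub
      · exact Real.continuousOn_log.mono (by
          intro x hx; simp only [Set.mem_compl_iff, Set.mem_singleton_iff]
          have := hx.1; intro h; rw [h] at this; norm_num at this)
      · apply ContinuousOn.log
        · fun_prop
        · intro x hx; have := hx.1; positivity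
    · intro x hx
      rw [interior_Icc] at hx
      obtain ⟨hx1, hx2⟩ := hx
      have hx0 : (0:ℝ) < x := by linarith
      have hx1p : (0:ℝ) < x + 1 := by linarith
      have hd : HasDerivAt (fun x : ℝ => x * (Real.log x - Real.log ((x + 1) / 2)))
          ((Real.log x - Real.log ((x+1)/2)) + x * (1/x - (1/((x+1)/2)) * (1/2))) x := by
        have h1 : HasDerivAt Real.log (1/x) x := by
          simpa using Real.hasDerivAt_log (ne_of_gt hx0)
        have h2 : HasDerivAt (fun x : ℝ => Real.log ((x+1)/2)) ((1/((x+1)/2)) * (1/2)) x := by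
          have hb : HasDerivAt (fun x : ℝ => (x+1)/2) (1/2) x := by
            simpa using ((hasDerivAt_id x).add_const 1).div_const 2
          have : HasDerivAt Real.log (1/((x+1)/2)) ((x+1)/2) := by
            simpa using Real.hasDerivAt_log (by positivity : ((x:ℝ)+1)/2 ≠ 0)
          exact this.comp x hb
        exact ((hasDerivAt_id' x).mul (h1.sub h2)).congr_deriv (by simp only [Pi.sub_apply]; ring)
      rw [hd.deriv]
      have hlog : Real.log ((x+1)/2) - Real.log x ≤ (x+1)/(2*x) - 1 := by
        have : Real.log (((x+1)/2) / x) ≤ ((x+1)/2)/x - 1 :=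
          Real.log_le_sub_one_of_pos (by positivity)
        rw [Real.log_div (by positivity) (ne_of_gt hx0)] at this
        calc Real.log ((x+1)/2) - Real.log x ≤ ((x+1)/2)/x - 1 := this
          _ = (x+1)/(2*x) - 1 := by ring_nf
      have key : (0:ℝ) < (Real.log x - Real.log ((x+1)/2)) + 1/(x+1) := by
        have h3 : Real.log x - Real.log ((x+1)/2) ≥ 1 - (x+1)/(2*x) := by linarith
        have h4 : (0:ℝ) < 1 - (x+1)/(2*x) + 1/(x+1) := by
          have e : 1 - (x+1)/(2*x) + 1/(x+1) = (x^2 + 2*x - 1)/(2*x*(x+1)) := by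
            field_simp; ring
          rw [e]
          exact div_pos (by nlinarith) (by positivity)
        linarith
      have e2 : (Real.log x - Real.log ((x+1)/2)) + x * (1/x - (1/((x+1)/2)) * (1/2))
          = (Real.log x - Real.log ((x+1)/2)) + 1/(x+1) := by
        field_simp
        ring
      rw [e2]; exact key
  intro a ha b hb hab
  rw [hcong a ha, hcong b hb]
  exact hmono ha hb hab

/-- monotone measurable left inverse of psiJS on [1/2,2] -/
noncomputable def psiInv (y : ℝ) : ℝ :=
  sSup ({1/2} ∪ {x ∈ Set.Icc (1/2 : ℝ) 2 | psiJS x ≤ y})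

lemma psiInv_mono : Monotone psiInv := by
  intro y y' h
  apply csSup_le_csSup
  · refine ⟨2, ?_⟩
    rintro x (hx | hx)
    · simp only [Set.mem_singleton_iff] at hx; rw [hx]; norm_num
    · exact hx.1.2
  · exact ⟨1/2, Set.mem_union_left _ rfl⟩
  · exact Set.union_subset_union_right _ (fun x hx => ⟨hx.1, le_trans hx.2 h⟩)

lemma psiInv_measurable : Measurable psiInv := psiInv_mono.measurable

lemma psiInv_leftInv {x : ℝ} (hx : x ∈ Set.Icc (1/2 : ℝ) 2) : psiInv (psiJS x) = x := by
  have hset : ({1/2} ∪ {z ∈ Set.Icc (1/2 : ℝ) 2 | psiJS z ≤ psiJS x}) = Set.Icc (1/2 : ℝ) x := by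
    ext z
    constructor
    · rintro (hz | ⟨hz1, hz2⟩)
      · simp only [Set.mem_singleton_iff] at hz
        subst hz; exact ⟨le_refl _, hx.1⟩
      · refine ⟨hz1.1, ?_⟩
        by_contra h
        push_neg at h
        exact absurd (psiJS_strictMonoOn hx hz1 h) (not_lt.mpr hz2)
    · intro hz
      right
      exact ⟨⟨hz.1, le_trans hz.2 hx.2⟩,
        hz.2.lt_or_eq.elim (fun h => le_of_lt (psiJS_strictMonoOn ⟨hz.1, le_trans hz.2 hx.2⟩ hx h))
          (fun h => by rw [h])⟩
  rw [psiInv, hset, csSup_Icc hx.1]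

lemma exp_sub_one_le (c : ℝ) (hc : 0 ≤ c) : Real.exp c - 1 ≤ c * (Real.exp c + 1) := by
  have h1 : -c + 1 ≤ Real.exp (-c) := Real.add_one_le_exp (-c)
  rw [Real.exp_neg] at h1
  have hE : (0:ℝ) < Real.exp c := Real.exp_pos c
  have h2 : (-c + 1) * Real.exp c ≤ 1 := by
    calc (-c + 1) * Real.exp c ≤ (Real.exp c)⁻¹ * Real.exp c := by
          exact mul_le_mul_of_nonneg_right h1 (le_of_lt hE)
      _ = 1 := inv_mul_cancel₀ (ne_of_gt hE)
  nlinarith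

lemma one_sub_exp_neg_le (c : ℝ) (hc : 0 ≤ c) : 1 - Real.exp (-c) ≤ c := by
  have h1 : -c + 1 ≤ Real.exp (-c) := Real.add_one_le_exp (-c)
  linarith

/-- key pointwise sum bound -/
lemma sum_bound (a b c : ℝ) (ha : 0 < a) (hb : 0 < b) (hc : 0 ≤ c)
    (hab : a ≤ Real.exp c * b) (hba : b ≤ Real.exp c * a) :
    a * Real.log (a / ((a + b) / 2)) + b * Real.log (b / ((a + b) / 2))
      ≤ c * (Real.exp c - 1) * b := by
  set E := Real.exp c with hE
  have hE1 : (1:ℝ) ≤ E := Real.one_le_exp hc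
  have hE0 : (0:ℝ) < E := Real.exp_pos c
  have hcE : E - 1 ≤ c * (E + 1) := exp_sub_one_le c hc
  have hm : (0:ℝ) < (a + b) / 2 := by linarith
  have h1 : a * Real.log (a / ((a + b) / 2)) ≤ a * (a / ((a + b) / 2) - 1) :=
    mul_le_mul_of_nonneg_left (Real.log_le_sub_one_of_pos (by positivity)) (le_of_lt ha)
  have h2 : b * Real.log (b / ((a + b) / 2)) ≤ b * (b / ((a + b) / 2) - 1) :=
    mul_le_mul_of_nonneg_left (Real.log_le_sub_one_of_pos (by positivity)) (le_of_lt hb)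
  have h3 : a * (a / ((a + b) / 2) - 1) + b * (b / ((a + b) / 2) - 1)
      = (a - b)^2 / (a + b) := by
    field_simp
    ring
  have h4 : (a - b)^2 / (a + b) ≤ c * (E - 1) * b := by
    rw [div_le_iff₀ (by linarith : (0:ℝ) < a + b)]
    rcases le_total b a with hle | hle
    · -- a ≥ b
      have hEb : (0:ℝ) ≤ (E - 1) * (a + b) := by
        apply mul_nonneg (by linarith) (by linarith)
      have k1 : (a - b) * (E + 1) ≤ (E - 1) * (a + b) := by nlinarith
      have k2 : a - b ≤ (E - 1) * b := by nlinarith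
      have p1 : (a - b) * ((a - b) * (E + 1)) ≤ (a - b) * ((E - 1) * (a + b)) :=
        mul_le_mul_of_nonneg_left k1 (by linarith)
      have p2 : (a - b) * ((E - 1) * (a + b)) ≤ ((E - 1) * b) * ((E - 1) * (a + b)) :=
        mul_le_mul_of_nonneg_right k2 hEb
      have p3 : (E - 1) * ((E - 1) * b * (a + b)) ≤ (c * (E + 1)) * ((E - 1) * b * (a + b)) :=
        mul_le_mul_of_nonneg_right hcE
          (mul_nonneg (mul_nonneg (by linarith) (by linarith)) (by linarith))
      have chain : (a - b)^2 * (E + 1) ≤ (c * (E - 1) * b * (a + b)) * (E + 1) := by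
        nlinarith [p1, p2, p3]
      exact le_of_mul_le_mul_right chain (by linarith)
    · -- b ≥ a
      have k1 : (b - a) * E ≤ (E - 1) * b := by nlinarith
      have hba0 : (0:ℝ) ≤ (b - a) * E := mul_nonneg (by linarith) (by linarith)
      have q1 : ((b - a) * E) * ((b - a) * E) ≤ ((E - 1) * b) * ((E - 1) * b) :=
        mul_self_le_mul_self hba0 k1
      have q2 : b * (E + 1) ≤ E * (a + b) := by nlinarith
      have q3 : (0:ℝ) ≤ c * (E - 1) * b * E := by
        apply mul_nonneg (mul_nonneg (mul_nonneg hc (by linarith)) (by linarith)) (by linarith)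
      have p1 : (c * (E - 1) * b * E) * (b * (E + 1)) ≤ (c * (E - 1) * b * E) * (E * (a + b)) :=
        mul_le_mul_of_nonneg_left q2 q3
      have p2 : (E - 1) * ((E - 1) * b^2 * E) ≤ (c * (E + 1)) * ((E - 1) * b^2 * E) :=
        mul_le_mul_of_nonneg_right hcE
          (mul_nonneg (mul_nonneg (by linarith) (by positivity)) (by linarith))
      have p3 : (E - 1)^2 * b^2 * 1 ≤ (E - 1)^2 * b^2 * E :=
        mul_le_mul_of_nonneg_left hE1 (by positivity)
      have chain : (a - b)^2 * (E * E) ≤ (c * (E - 1) * b * (a + b)) * (E * E) := by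
        nlinarith [q1, p1, p2, p3]
      exact le_of_mul_le_mul_right chain (by positivity)
  linarith

/-- c ≥ log 2 : psiJS-type bound -/
lemma psi_exp_le (c : ℝ) (hc : Real.log 2 ≤ c) :
    Real.exp c * Real.log (Real.exp c / ((Real.exp c + 1) / 2)) ≤ c * (Real.exp c - 1) := by
  have h2 : (2:ℝ) ≤ Real.exp c := by
    calc (2:ℝ) = Real.exp (Real.log 2) := (Real.exp_log (by norm_num)).symm
      _ ≤ Real.exp c := Real.exp_le_exp.mpr hc
  set t := Real.exp c with ht
  have hc0 : 0 ≤ c := le_trans (Real.log_nonneg (by norm_num)) hc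
  have hlogt : Real.log t = c := Real.log_exp c
  have hsq : Real.sqrt t ≤ (t + 1) / 2 := by
    nlinarith [Real.sq_sqrt (by linarith : (0:ℝ) ≤ t), Real.sqrt_nonneg t,
      sq_nonneg (Real.sqrt t - 1)]
  have hlog1 : Real.log (t / ((t + 1) / 2)) ≤ c / 2 := by
    rw [Real.log_div (by linarith) (by positivity)]
    have : Real.log (Real.sqrt t) ≤ Real.log ((t + 1) / 2) :=
      Real.log_le_log (Real.sqrt_pos.mpr (by linarith)) hsq
    rw [Real.log_sqrt (by linarith), hlogt] at this
    linarith
  calc t * Real.log (t / ((t + 1) / 2)) ≤ t * (c / 2) :=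
        mul_le_mul_of_nonneg_left hlog1 (by linarith)
    _ ≤ c * (t - 1) := by nlinarith

lemma abs_term (a b c : ℝ) (ha : 0 < a) (hb : 0 < b) (hc : 0 ≤ c)
    (h1 : Real.exp (-c) * b ≤ a) (h2 : a ≤ Real.exp c * b) :
    |a * Real.log (a / ((a + b) / 2))| ≤ (c * Real.exp c) * b := by
  have hm : (0:ℝ) < (a + b) / 2 := by linarith
  have hq : (0:ℝ) < a / ((a + b) / 2) := by positivity
  have hE1 : (1:ℝ) ≤ Real.exp c := Real.one_le_exp hc
  have hE1' : Real.exp (-c) ≤ 1 := Real.exp_le_one_iff.mpr (by linarith)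
  have hup : a / ((a + b) / 2) ≤ Real.exp c := by
    rw [div_le_iff₀ hm]
    nlinarith
  have hlo : Real.exp (-c) ≤ a / ((a + b) / 2) := by
    rw [le_div_iff₀ hm]
    nlinarith
  have hlogle : Real.log (a / ((a + b) / 2)) ≤ c := by
    have := Real.log_le_log hq hup
    rwa [Real.log_exp] at this
  have hloggt : -c ≤ Real.log (a / ((a + b) / 2)) := by
    have := Real.log_le_log (Real.exp_pos (-c)) hlo
    rwa [Real.log_exp] at this
  rw [abs_mul, abs_of_pos ha]
  have habs : |Real.log (a / ((a + b) / 2))| ≤ c := abs_le.mpr ⟨hloggt, hlogle⟩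
  calc a * |Real.log (a / ((a + b) / 2))| ≤ a * c :=
        mul_le_mul_of_nonneg_left habs ha.le
    _ ≤ (Real.exp c * b) * c := mul_le_mul_of_nonneg_right h2 hc
    _ = (c * Real.exp c) * b := by ring

/-- Relationship between MBP and ABP: under an ε-accurate prior
belief and ε_m-Maximum Bayesian Privacy, the Average Bayesian Privacy leakage
`sqrt(JS(F^A‖F^B))` is at most `(1/√2)·sqrt((ε_m+ε)(e^{ε_m+ε} − 1))`. -/
theorem abp_le_of_mbp
    {α : Type*} [MeasurableSpace α] (μ : Measure α)
    {Ω : Type*} [MeasurableSpace Ω] (P : Measure Ω) [IsProbabilityMeasure P]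
    (fD fB : α → ℝ) (post : α → Ω → ℝ) (fA : α → ℝ) (εm ε : ℝ)
    (hεm : 0 ≤ εm) (hε : 0 ≤ ε)
    (hfD : ∀ d, 0 < fD d) (hfB : ∀ d, 0 < fB d)
    (hB1 : ∫ d, fB d ∂μ = 1)
    (hint : ∀ d, Integrable (post d) P)
    (hfA : ∀ d, fA d = ∫ w, post d w ∂P)
    (hprior : ∀ d, Real.exp (-ε) ≤ fB d / fD d ∧ fB d / fD d ≤ Real.exp ε)
    (hMBP : ∀ d w, Real.exp (-εm) ≤ post d w / fD d ∧ post d w / fD d ≤ Real.exp εm) :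
    Real.sqrt (JSdiv μ fA fB)
      ≤ (1 / Real.sqrt 2) * Real.sqrt ((εm + ε) * (Real.exp (εm + ε) - 1)) := by
  obtain ⟨c, hc_def⟩ : ∃ x : ℝ, x = εm + ε := ⟨_, rfl⟩
  have hc : 0 ≤ c := by rw [hc_def]; positivity
  obtain ⟨E, hE_def⟩ : ∃ x : ℝ, x = Real.exp c := ⟨_, rfl⟩
  have hE0 : (0:ℝ) < E := hE_def ▸ Real.exp_pos c
  have hE1 : (1:ℝ) ≤ E := hE_def ▸ Real.one_le_exp hc
  obtain ⟨g1, hg1_def⟩ : ∃ g : α → ℝ,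
      g = fun d => fA d * Real.log (fA d / ((fA d + fB d) / 2)) := ⟨_, rfl⟩
  obtain ⟨g2, hg2_def⟩ : ∃ g : α → ℝ,
      g = fun d => fB d * Real.log (fB d / ((fA d + fB d) / 2)) := ⟨_, rfl⟩
  have hJS : JSdiv μ fA fB = (1/2) * ((∫ d, g1 d ∂μ) + (∫ d, g2 d ∂μ)) := by
    simp only [hg1_def, hg2_def, JSdiv]
  -- fB is integrable
  have hfBint : Integrable fB μ := by
    by_contra h
    rw [integral_undef h] at hB1
    exact one_ne_zero hB1.symm
  -- bounds on fA
  have hAub : ∀ d, fA d ≤ E * fB d := by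
    intro d
    have h1 : fA d ≤ Real.exp εm * fD d := by
      rw [hfA d]
      calc ∫ w, post d w ∂P ≤ ∫ _w, Real.exp εm * fD d ∂P := by
            apply integral_mono (hint d) (integrable_const _)
            intro w
            have h := (hMBP d w).2
            rw [div_le_iff₀ (hfD d)] at h
            exact h
        _ = Real.exp εm * fD d := by simp
    have h2 : fD d ≤ Real.exp ε * fB d := by
      have h := (hprior d).1
      rw [le_div_iff₀ (hfD d)] at h
      have hee : Real.exp (-ε) * Real.exp ε = 1 := by
        rw [← Real.exp_add]; simp
      have h3 := mul_le_mul_of_nonneg_left h (Real.exp_pos ε).le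
      have h4 : Real.exp ε * (Real.exp (-ε) * fD d) = fD d := by
        rw [← mul_assoc, mul_comm (Real.exp ε), hee, one_mul]
      linarith
    calc fA d ≤ Real.exp εm * fD d := h1
      _ ≤ Real.exp εm * (Real.exp ε * fB d) :=
          mul_le_mul_of_nonneg_left h2 (Real.exp_pos εm).le
      _ = E * fB d := by rw [hE_def, hc_def, Real.exp_add]; ring
  have hAlb : ∀ d, Real.exp (-c) * fB d ≤ fA d := by
    intro d
    have h1 : Real.exp (-εm) * fD d ≤ fA d := by
      rw [hfA d]
      calc Real.exp (-εm) * fD d = ∫ _w, Real.exp (-εm) * fD d ∂P := by simp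
        _ ≤ ∫ w, post d w ∂P := by
            apply integral_mono (integrable_const _) (hint d)
            intro w
            have h := (hMBP d w).1
            rw [le_div_iff₀ (hfD d)] at h
            exact h
    have h2 : Real.exp (-ε) * fB d ≤ fD d := by
      have h := (hprior d).2
      rw [div_le_iff₀ (hfD d)] at h
      have hee : Real.exp (-ε) * Real.exp ε = 1 := by
        rw [← Real.exp_add]; simp
      have h3 := mul_le_mul_of_nonneg_left h (Real.exp_pos (-ε)).le
      have h4 : Real.exp (-ε) * (Real.exp ε * fD d) = fD d := by
        rw [← mul_assoc, hee, one_mul]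
      linarith
    calc Real.exp (-c) * fB d = Real.exp (-εm) * (Real.exp (-ε) * fB d) := by
          rw [hc_def, neg_add, Real.exp_add]; ring
      _ ≤ Real.exp (-εm) * fD d := mul_le_mul_of_nonneg_left h2 (Real.exp_pos (-εm)).le
      _ ≤ fA d := h1
  have hfA0 : ∀ d, 0 < fA d := fun d =>
    lt_of_lt_of_le (mul_pos (Real.exp_pos (-c)) (hfB d)) (hAlb d)
  have hcE : Real.exp (-c) * E = 1 := by rw [hE_def, ← Real.exp_add]; simp
  have hBub : ∀ d, fB d ≤ E * fA d := by
    intro d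
    have h := hAlb d
    have h3 := mul_le_mul_of_nonneg_left h hE0.le
    have h4 : E * (Real.exp (-c) * fB d) = fB d := by
      rw [← mul_assoc, mul_comm E, hcE, one_mul]
    linarith
  -- pointwise absolute bounds
  have habs1 : ∀ d, |g1 d| ≤ (c * E) * fB d := by
    intro d
    rw [hg1_def, hE_def]
    exact abs_term (fA d) (fB d) c (hfA0 d) (hfB d) hc (hAlb d)
      (by rw [← hE_def]; exact hAub d)
  have habs2 : ∀ d, |g2 d| ≤ (c * E * E) * fB d := by
    intro d
    have hlo2 : Real.exp (-c) * fA d ≤ fB d := by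
      have h3 := mul_le_mul_of_nonneg_left (hAub d) (Real.exp_pos (-c)).le
      have h4 : Real.exp (-c) * (E * fB d) = fB d := by
        rw [← mul_assoc, hcE, one_mul]
      linarith
    have h : |fB d * Real.log (fB d / ((fB d + fA d) / 2))| ≤ (c * Real.exp c) * fA d :=
      abs_term (fB d) (fA d) c (hfB d) (hfA0 d) hc hlo2
        (by rw [← hE_def]; exact hBub d)
    rw [add_comm (fB d) (fA d), ← hE_def] at h
    have h5 : (c * E) * fA d ≤ (c * E) * (E * fB d) :=
      mul_le_mul_of_nonneg_left (hAub d) (by positivity)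
    calc |g2 d| = |fB d * Real.log (fB d / ((fA d + fB d) / 2))| := by rw [hg2_def]
      _ ≤ (c * E) * fA d := h
      _ ≤ (c * E) * (E * fB d) := h5
      _ = (c * E * E) * fB d := by ring
  -- integrability transfer
  have htrans : AEStronglyMeasurable fA μ → Integrable g1 μ ∧ Integrable g2 μ := by
    intro hA
    have hAae : AEMeasurable fA μ := aestronglyMeasurable_iff_aemeasurable.mp hA
    have hBae : AEMeasurable fB μ := hfBint.aemeasurable
    have hMae : AEMeasurable (fun d => (fA d + fB d) / 2) μ :=
      (hAae.add hBae).div_const 2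
    have hg1m : AEStronglyMeasurable g1 μ := by
      rw [aestronglyMeasurable_iff_aemeasurable, hg1_def]
      exact hAae.mul (Real.measurable_log.comp_aemeasurable (hAae.div hMae))
    have hg2m : AEStronglyMeasurable g2 μ := by
      rw [aestronglyMeasurable_iff_aemeasurable, hg2_def]
      exact hBae.mul (Real.measurable_log.comp_aemeasurable (hBae.div hMae))
    constructor
    · apply Integrable.mono (hfBint.const_mul (c * E)) hg1m
      filter_upwards with d
      rw [Real.norm_eq_abs, Real.norm_eq_abs]
      exact le_trans (habs1 d) (le_abs_self _)
    · apply Integrable.mono (hfBint.const_mul (c * E * E)) hg2m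
      filter_upwards with d
      rw [Real.norm_eq_abs, Real.norm_eq_abs]
      exact le_trans (habs2 d) (le_abs_self _)
  have key : JSdiv μ fA fB ≤ c * (E - 1) / 2 := by
    by_cases h1 : Integrable g1 μ
    · by_cases h2 : Integrable g2 μ
      · -- both integrable
        rw [hJS, ← integral_add h1 h2]
        have hmono : ∫ d, (g1 d + g2 d) ∂μ ≤ ∫ d, (c * (E - 1)) * fB d ∂μ := by
          apply integral_mono (h1.add h2) (hfBint.const_mul _)
          intro d
          simp only [hg1_def, hg2_def]
          have := sum_bound (fA d) (fB d) c (hfA0 d) (hfB d) hc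
            (by rw [← hE_def]; exact hAub d) (by rw [← hE_def]; exact hBub d)
          rw [← hE_def] at this
          exact this
        have hconst : ∫ d, (c * (E - 1)) * fB d ∂μ = c * (E - 1) := by
          rw [integral_const_mul, hB1, mul_one]
        rw [hconst] at hmono
        linarith
      · by_cases hcl : c < Real.log 2
        · -- small c : g1 integrable forces g2 integrable, contradiction
          exfalso
          apply h2
          have hid : ∀ d, fA d = fB d * psiInv (g1 d / fB d) := by
            intro d
            have hb := (hfB d).ne'
            have hr : fA d / fB d ∈ Set.Icc (1/2:ℝ) 2 := by
              constructor
              · have hh : (1/2:ℝ) < Real.exp (-c) := by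
                  have h3 : Real.exp (-Real.log 2) < Real.exp (-c) :=
                    Real.exp_lt_exp.mpr (by linarith)
                  rw [Real.exp_neg, Real.exp_log (by norm_num : (0:ℝ) < 2)] at h3
                  norm_num at h3 ⊢
                  linarith
                rw [le_div_iff₀ (hfB d)]
                nlinarith [hAlb d, hfB d]
              · rw [div_le_iff₀ (hfB d)]
                have hE2 : E < 2 := by
                  have h3 : Real.exp c < Real.exp (Real.log 2) := Real.exp_lt_exp.mpr hcl
                  rw [Real.exp_log (by norm_num : (0:ℝ) < 2)] at h3
                  rw [hE_def]; exact h3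
                nlinarith [hAub d, hfB d]
            have hab : fA d + fB d ≠ 0 :=
              ne_of_gt (by linarith [hfA0 d, hfB d])
            have harg : (fA d / fB d) / ((fA d / fB d + 1) / 2)
                = fA d / ((fA d + fB d) / 2) := by
              field_simp
            have hpsi : g1 d / fB d = psiJS (fA d / fB d) := by
              rw [psiJS, harg, hg1_def]
              exact mul_div_right_comm (fA d) _ (fB d)
            rw [hpsi, psiInv_leftInv hr, mul_comm, div_mul_cancel₀ _ hb]
          have hA : AEStronglyMeasurable fA μ := by
            rw [aestronglyMeasurable_iff_aemeasurable]
            have heq : fA = fun d => fB d * psiInv (g1 d / fB d) := funext hid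
            rw [heq]
            exact hfBint.aemeasurable.mul
              (psiInv_measurable.comp_aemeasurable
                ((h1.aemeasurable).div hfBint.aemeasurable))
          exact (htrans hA).2
        · -- large c : crude bound on the g1 integral
          push_neg at hcl
          rw [hJS, integral_undef h2, add_zero]
          have hargE : (1:ℝ) ≤ E / ((E + 1) / 2) := by
            rw [le_div_iff₀ (by positivity)]
            linarith
          have hL0 : 0 ≤ Real.log (E / ((E + 1) / 2)) := Real.log_nonneg hargE
          have hpt : ∀ d, g1 d ≤ (E * Real.log (E / ((E + 1) / 2))) * fB d := by
            intro d
            have hrhs : 0 ≤ (E * Real.log (E / ((E + 1) / 2))) * fB d :=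
              mul_nonneg (mul_nonneg hE0.le hL0) (hfB d).le
            rw [hg1_def]
            rcases le_or_gt (Real.log (fA d / ((fA d + fB d) / 2))) 0 with hneg | hpos
            · have h5 : fA d * Real.log (fA d / ((fA d + fB d) / 2)) ≤ 0 :=
                mul_nonpos_of_nonneg_of_nonpos (hfA0 d).le hneg
              linarith
            · have hm : (0:ℝ) < (fA d + fB d) / 2 := by
                have := hfA0 d; have := hfB d; linarith
              have hargle : fA d / ((fA d + fB d) / 2) ≤ E / ((E + 1) / 2) := by
                rw [div_le_div_iff₀ hm (by positivity)]
                nlinarith [hAub d, hfA0 d, hfB d]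
              have hlogle : Real.log (fA d / ((fA d + fB d) / 2))
                  ≤ Real.log (E / ((E + 1) / 2)) :=
                Real.log_le_log (div_pos (hfA0 d) hm) hargle
              have hstep : fA d * Real.log (fA d / ((fA d + fB d) / 2))
                  ≤ (E * fB d) * Real.log (E / ((E + 1) / 2)) :=
                mul_le_mul (hAub d) hlogle hpos.le (mul_nonneg hE0.le (hfB d).le)
              calc fA d * Real.log (fA d / ((fA d + fB d) / 2))
                  ≤ (E * fB d) * Real.log (E / ((E + 1) / 2)) := hstep
                _ = (E * Real.log (E / ((E + 1) / 2))) * fB d := by ring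
          have hint1 : ∫ d, g1 d ∂μ ≤ (E * Real.log (E / ((E + 1) / 2))) := by
            calc ∫ d, g1 d ∂μ ≤ ∫ d, (E * Real.log (E / ((E + 1) / 2))) * fB d ∂μ :=
                  integral_mono h1 (hfBint.const_mul _) hpt
              _ = E * Real.log (E / ((E + 1) / 2)) := by
                  rw [integral_const_mul, hB1, mul_one]
          have hfinal := psi_exp_le c hcl
          rw [← hE_def] at hfinal
          linarith
    · by_cases h2 : Integrable g2 μ
      · -- g2 integrable forces g1 integrable, contradiction
        exfalso
        apply h1
        have hid : ∀ d, fA d = 2 * (fB d * Real.exp (-(g2 d / fB d))) - fB d := by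
          intro d
          have hb := (hfB d).ne'
          have hm : (0:ℝ) < (fA d + fB d) / 2 := by
            have := hfA0 d; have := hfB d; linarith
          have hdiv : g2 d / fB d = Real.log (fB d / ((fA d + fB d) / 2)) := by
            rw [hg2_def]
            exact mul_div_cancel_left₀ _ hb
          have hexp : Real.exp (g2 d / fB d) = fB d / ((fA d + fB d) / 2) := by
            rw [hdiv, Real.exp_log (div_pos (hfB d) hm)]
          rw [Real.exp_neg, hexp, inv_div]
          field_simp
          ring
        have hA : AEStronglyMeasurable fA μ := by
          rw [aestronglyMeasurable_iff_aemeasurable]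
          have heq : fA = fun d => 2 * (fB d * Real.exp (-(g2 d / fB d))) - fB d :=
            funext hid
          rw [heq]
          exact (((aemeasurable_const (b := (2:ℝ))).mul
            (hfBint.aemeasurable.mul
              (Real.measurable_exp.comp_aemeasurable
                ((h2.aemeasurable.div hfBint.aemeasurable).neg)))).sub
            hfBint.aemeasurable)
        exact (htrans hA).1
      · -- neither integrable
        rw [hJS, integral_undef h1, integral_undef h2, add_zero, mul_zero]
        have h5 : 0 ≤ c * (E - 1) := mul_nonneg hc (by linarith)
        linarith
  -- conclude
  have hK : (0:ℝ) ≤ c * (E - 1) := mul_nonneg hc (by linarith)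
  calc Real.sqrt (JSdiv μ fA fB) ≤ Real.sqrt (c * (E - 1) / 2) := Real.sqrt_le_sqrt key
    _ = Real.sqrt (c * (E - 1)) / Real.sqrt 2 := Real.sqrt_div hK 2
    _ = (1 / Real.sqrt 2) * Real.sqrt ((εm + ε) * (Real.exp (εm + ε) - 1)) := by
        rw [hE_def, hc_def, one_div, inv_mul_eq_div]
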